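/- There exists a universal constant c > 0 with the following property. Let X ⊆ ℝⁿ and Y ⊆ ℝᵐ be nonempty convex compact sets, κ = max{max_{x∈X}‖x‖₂, max_{y∈Y}‖y‖₂} > 0, C_X = cone({κ}×X), C_Y = cone({κ}×Y), and let F : X×Y → ℝ be convex in its first argument and concave in its second. Let p, q ∈ ℕ with q ≥ p, ω_t = t^p, θ_t = t^q, T ≥ 1, and let x_t ∈ X, y_t ∈ Y, f_t ∈ ℝⁿ, g_t ∈ ℝᵐ (t = 1,…,T) satisfy: f_t is a subgradient of F(·, y_t) at x_t with ‖f_t‖₂ ≤ L, g_t is a supergradient of F(x_t, ·) at y_t with ‖g_t‖₂ ≤ L; the CBA⁺ recursions hold: u_0^x = 0, u_t^x = π_{C_X}(u_{t−1}^x + ω_t (⟨f_t, x_t⟩/κ, −f_t)) with, for every t, some β_t ≥ 0 such that u_{t−1}^x = β_t·(κ, x_t); and u_0^y = 0, u_t^y = π_{C_Y}(u_{t−1}^y + ω_t (−⟨g_t, y_t⟩/κ, g_t)) with, for every t, some β'_t ≥ 0 such that u_{t−1}^y = β'_t·(κ, y_t). Set (x̄_T, ȳ_T) = ∑_{t=1}^T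 θ_t (x_t, y_t) / ∑_{t=1}^T θ_t. Then sup_{y∈Y} F(x̄_T, y) − inf_{x∈X} F(x, ȳ_T) ≤ c · κ L (q+1) / (√(p+1) · √T). -/

import Mathlib

set_option autoImplicit false

open scoped RealInnerProductSpace
open Finset

noncomputable section

/-- The lifted vector `(t, y) ∈ ℝ × ℝⁿ = ℝ^{n+1}`. -/
def pr {n : ℕ} (t : ℝ) (y : EuclideanSpace ℝ (Fin n)) :
    EuclideanSpace ℝ (Fin (n + 1)) :=
  WithLp.toLp 2 (Fin.cons t (fun i => y i) : Fin (n + 1) → ℝ)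

/-- The conic hull `cone({κ} × X) = {α • (κ, x) : α ≥ 0, x ∈ X}`. -/
def coneLift {n : ℕ} (κ : ℝ) (X : Set (EuclideanSpace ℝ (Fin n))) :
    Set (EuclideanSpace ℝ (Fin (n + 1))) :=
  {u | ∃ α : ℝ, 0 ≤ α ∧ ∃ x ∈ X, u = α • pr κ x}

/-- `p` is the Euclidean orthogonal projection of `u` onto the set `S`. -/
def IsProjOn {E : Type*} [NormedAddCommGroup E] [InnerProductSpace ℝ E]
    (u : E) (S : Set E) (p : E) : Prop :=
  p ∈ S ∧ ∀ z ∈ S, dist u p ≤ dist u z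

lemma inner_pr {n : ℕ} (a b : ℝ) (v w : EuclideanSpace ℝ (Fin n)) :
    ⟪pr a v, pr b w⟫ = a * b + ⟪v, w⟫ := by
  simp only [PiLp.inner_apply, RCLike.inner_apply, starRingEnd_apply, star_trivial]
  rw [Fin.sum_univ_succ]
  simp [pr, mul_comm]

lemma norm_pr_sq {n : ℕ} (a : ℝ) (v : EuclideanSpace ℝ (Fin n)) :
    ‖pr a v‖ ^ 2 = a ^ 2 + ‖v‖ ^ 2 := by
  rw [← real_inner_self_eq_norm_sq, ← real_inner_self_eq_norm_sq, inner_pr, sq]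

lemma coneLift_convex {n : ℕ} {κ : ℝ} {X : Set (EuclideanSpace ℝ (Fin n))}
    (hX : Convex ℝ X) : Convex ℝ (coneLift κ X) := by
  rintro u ⟨α, hα, x, hx, rfl⟩ v ⟨β, hβ, y, hy, rfl⟩ a b ha hb hab
  rcases eq_or_lt_of_le (by positivity : (0:ℝ) ≤ a * α + b * β) with h0 | h0
  · have haα : a * α = 0 := by nlinarith [mul_nonneg ha hα, mul_nonneg hb hβ]
    have hbβ : b * β = 0 := by nlinarith [mul_nonneg ha hα, mul_nonneg hb hβ]
    refine ⟨0, le_refl 0, x, hx, ?_⟩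
    rw [smul_smul, smul_smul, haα, hbβ]
    simp
  · have h0' : a*α + b*β ≠ 0 := ne_of_gt h0
    have hcd : a*α/(a*α+b*β) + b*β/(a*α+b*β) = 1 := by field_simp
    refine ⟨a * α + b * β, le_of_lt h0, (a*α/(a*α+b*β)) • x + (b*β/(a*α+b*β)) • y,
      hX hx hy (by positivity) (by positivity) hcd, ?_⟩
    have hpr : ∀ (c d : ℝ) (z w : EuclideanSpace ℝ (Fin n)), c + d = 1 →
        pr κ (c • z + d • w) = c • pr κ z + d • pr κ w := by
      intro c d z w h1
      ext i
      refine Fin.cases ?_ (fun j => ?_) i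
      · simp only [pr, PiLp.toLp_apply, Fin.cons_zero, PiLp.add_apply, PiLp.smul_apply, smul_eq_mul]
        linear_combination (-κ) * h1
      · simp only [pr, PiLp.toLp_apply, Fin.cons_succ, PiLp.add_apply, PiLp.smul_apply, smul_eq_mul]
    rw [hpr _ _ _ _ hcd]
    match_scalars <;> field_simp

lemma coneLift_zero_mem {n : ℕ} {κ : ℝ} {X : Set (EuclideanSpace ℝ (Fin n))}
    (hX : X.Nonempty) : (0 : EuclideanSpace ℝ (Fin (n+1))) ∈ coneLift κ X := by
  obtain ⟨x, hx⟩ := hX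
  exact ⟨0, le_refl 0, x, hx, (zero_smul ℝ _).symm⟩

lemma coneLift_smul_mem {n : ℕ} {κ : ℝ} {X : Set (EuclideanSpace ℝ (Fin n))}
    {u : EuclideanSpace ℝ (Fin (n+1))} (hu : u ∈ coneLift κ X) {c : ℝ} (hc : 0 ≤ c) :
    c • u ∈ coneLift κ X := by
  obtain ⟨α, hα, x, hx, rfl⟩ := hu
  exact ⟨c * α, mul_nonneg hc hα, x, hx, (smul_smul c α _)⟩

lemma isProjOn_inner_le {n : ℕ} {K : Set (EuclideanSpace ℝ (Fin n))} (hK : Convex ℝ K)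
    {u v : EuclideanSpace ℝ (Fin n)} (h : IsProjOn u K v) :
    ∀ z ∈ K, ⟪u - v, z - v⟫ ≤ 0 := by
  obtain ⟨hvK, hmin⟩ := h
  have hne : Nonempty K := ⟨⟨v, hvK⟩⟩
  have hbdd : BddBelow (Set.range fun w : K => ‖u - (w : EuclideanSpace ℝ (Fin n))‖) :=
    ⟨0, by rintro r ⟨w, rfl⟩; exact norm_nonneg _⟩
  have h1 : ‖u - v‖ ≤ ⨅ w : K, ‖u - (w : EuclideanSpace ℝ (Fin n))‖ :=
    le_ciInf fun w => by simpa [dist_eq_norm] using hmin w w.2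
  have h2 : (⨅ w : K, ‖u - (w : EuclideanSpace ℝ (Fin n))‖) ≤ ‖u - v‖ :=
    ciInf_le hbdd ⟨v, hvK⟩
  exact (norm_eq_iInf_iff_real_inner_le_zero hK hvK).mp (le_antisymm h1 h2)

/-- For projection onto a cone, the residual is orthogonal to the projection. -/
lemma proj_cone_inner_self {n : ℕ} {κ : ℝ} {X : Set (EuclideanSpace ℝ (Fin n))}
    (hXconv : Convex ℝ X) (hXne : X.Nonempty)
    {u v : EuclideanSpace ℝ (Fin (n+1))} (h : IsProjOn u (coneLift κ X) v) :
    ⟪u - v, v⟫ = 0 := by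
  have P := isProjOn_inner_le (coneLift_convex hXconv) h
  have e1 := P ((2:ℝ) • v) (coneLift_smul_mem h.1 (by norm_num))
  have e2 := P 0 (coneLift_zero_mem hXne)
  rw [show (2:ℝ) • v - v = v by module] at e1
  rw [zero_sub, inner_neg_right] at e2
  linarith

/-- For projection onto a cone, the residual has nonpositive inner product with the cone. -/
lemma proj_cone_inner_le {n : ℕ} {κ : ℝ} {X : Set (EuclideanSpace ℝ (Fin n))}
    (hXconv : Convex ℝ X) (hXne : X.Nonempty)
    {u v : EuclideanSpace ℝ (Fin (n+1))} (h : IsProjOn u (coneLift κ X) v) :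
    ∀ z ∈ coneLift κ X, ⟪u - v, z⟫ ≤ 0 := by
  intro z hz
  have P := isProjOn_inner_le (coneLift_convex hXconv) h z hz
  rw [inner_sub_right] at P
  have := proj_cone_inner_self hXconv hXne h
  linarith

lemma proj_cone_norm_le {n : ℕ} {κ : ℝ} {X : Set (EuclideanSpace ℝ (Fin n))}
    (hXconv : Convex ℝ X) (hXne : X.Nonempty)
    {u v : EuclideanSpace ℝ (Fin (n+1))} (h : IsProjOn u (coneLift κ X) v) :
    ‖v‖ ^ 2 ≤ ‖u‖ ^ 2 := by
  have h0 := proj_cone_inner_self hXconv hXne h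
  have h1 := norm_add_sq_real (u - v) v
  rw [sub_add_cancel] at h1
  nlinarith [sq_nonneg ‖u - v‖]
  

lemma coneLift_inner_nonneg {n : ℕ} {κ : ℝ} {X : Set (EuclideanSpace ℝ (Fin n))}
    (hXκ : ∀ x ∈ X, ‖x‖ ≤ κ)
    {u : EuclideanSpace ℝ (Fin (n+1))} (hu : u ∈ coneLift κ X)
    {x' : EuclideanSpace ℝ (Fin n)} (hx' : ‖x'‖ ≤ κ) :
    0 ≤ ⟪u, pr κ x'⟫ := by
  obtain ⟨α, hα, y, hy, rfl⟩ := hu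
  rw [real_inner_smul_left, inner_pr]
  have h1 := abs_real_inner_le_norm y x'
  have h2 := hXκ y hy
  have h3 : -(κ * κ) ≤ ⟪y, x'⟫ := by
    nlinarith [abs_le.mp h1, norm_nonneg y, norm_nonneg x']
  nlinarith

/-- Abstract CBA⁺ weighted regret bound. -/
lemma regret_bound {n : ℕ} {X : Set (EuclideanSpace ℝ (Fin n))}
    (hXconv : Convex ℝ X) (hXne : X.Nonempty)
    {κ L : ℝ} (hκ : 0 < κ) (hL : 0 ≤ L)
    (hXκ : ∀ x ∈ X, ‖x‖ ≤ κ)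
    (p q T : ℕ) (hpq : p ≤ q)
    (x : ℕ → EuclideanSpace ℝ (Fin n))
    (hx : ∀ t ∈ Icc 1 T, x t ∈ X)
    (v : ℕ → EuclideanSpace ℝ (Fin (n+1)))
    (hv0 : ∀ t ∈ Icc 1 T, ⟪pr κ (x t), v t⟫ = 0)
    (hvn : ∀ t ∈ Icc 1 T, ‖v t‖ ^ 2 ≤ 2 * L ^ 2)
    (u : ℕ → EuclideanSpace ℝ (Fin (n+1))) (hu0 : u 0 = 0)
    (hproj : ∀ t ∈ Icc 1 T,
      IsProjOn (u (t-1) + ((t:ℝ) ^ p) • v t) (coneLift κ X) (u t))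
    (hprop : ∀ t ∈ Icc 1 T, ∃ β : ℝ, 0 ≤ β ∧ u (t-1) = β • pr κ (x t))
    {x' : EuclideanSpace ℝ (Fin n)} (hx' : x' ∈ X) :
    ∑ t ∈ Icc 1 T, ((t:ℝ) ^ q) * ⟪v t, pr κ x'⟫ ≤
      2 * κ * L * (T:ℝ) ^ (q - p) * Real.sqrt (∑ t ∈ Icc 1 T, ((t:ℝ) ^ (2 * p))) := by
  set z : EuclideanSpace ℝ (Fin (n+1)) := pr κ x' with hz
  have hzK : z ∈ coneLift κ X := ⟨1, zero_le_one, x', hx', (one_smul ℝ _).symm⟩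
  -- inner product of u (t-1) with v t vanishes
  have hiz : ∀ t ∈ Icc 1 T, ⟪u (t-1), v t⟫ = 0 := by
    intro t ht
    obtain ⟨β, hβ, hb⟩ := hprop t ht
    rw [hb, real_inner_smul_left, hv0 t ht, mul_zero]
  -- norm bound on u N
  have hnorm : ∀ N, N ≤ T → ‖u N‖ ^ 2 ≤ 2 * L ^ 2 * ∑ t ∈ Icc 1 N, ((t:ℝ) ^ (2 * p)) := by
    intro N
    induction N with
    | zero => intro _; simp [hu0]
    | succ N ih =>
      intro hNT
      have hmem : N + 1 ∈ Icc 1 T := mem_Icc.mpr ⟨Nat.succ_le_succ (Nat.zero_le N), hNT⟩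
      have ihN := ih (Nat.le_of_succ_le hNT)
      have hle : ‖u (N+1)‖ ^ 2 ≤ ‖u N + (((N:ℝ)+1) ^ p) • v (N+1)‖ ^ 2 := by
        have := proj_cone_norm_le hXconv hXne (hproj (N+1) hmem)
        simpa [Nat.add_sub_cancel] using this
      have hexp : ‖u N + (((N:ℝ)+1) ^ p) • v (N+1)‖ ^ 2
          = ‖u N‖ ^ 2 + (((N:ℝ)+1) ^ p) ^ 2 * ‖v (N+1)‖ ^ 2 := by
        have h0 : ⟪u N, v (N+1)⟫ = 0 := by
          have := hiz (N+1) hmem; simpa [Nat.add_sub_cancel] using this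
        rw [norm_add_sq_real, real_inner_smul_right, h0, norm_smul, mul_pow,
          Real.norm_eq_abs, sq_abs]
        ring
      have hvle : ‖v (N+1)‖ ^ 2 ≤ 2 * L ^ 2 := hvn (N+1) hmem
      have hsum : ∑ t ∈ Icc 1 (N+1), ((t:ℝ) ^ (2 * p))
          = (∑ t ∈ Icc 1 N, ((t:ℝ) ^ (2 * p))) + ((N:ℝ)+1) ^ (2 * p) := by
        rw [Finset.sum_Icc_succ_top (Nat.one_le_iff_ne_zero.mpr (Nat.succ_ne_zero N))]
        push_cast; ring_nf
      have hp2 : (((N:ℝ)+1) ^ p) ^ 2 = ((N:ℝ)+1) ^ (2 * p) := by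
        rw [← pow_mul]; ring_nf
      have hppos : (0:ℝ) ≤ (((N:ℝ)+1) ^ p) ^ 2 := sq_nonneg _
      rw [hp2] at hexp
      rw [hsum]
      calc ‖u (N+1)‖ ^ 2 ≤ ‖u N‖ ^ 2 + ((N:ℝ)+1) ^ (2 * p) * ‖v (N+1)‖ ^ 2 := by
            rw [← hexp]; exact hle
        _ ≤ 2 * L ^ 2 * (∑ t ∈ Icc 1 N, ((t:ℝ) ^ (2 * p))) + ((N:ℝ)+1) ^ (2 * p) * (2 * L ^ 2) := by
            have hnn : (0:ℝ) ≤ ((N:ℝ)+1) ^ (2 * p) := by positivity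
            have h5 := mul_le_mul_of_nonneg_left hvle hnn
            linarith
        _ = 2 * L ^ 2 * ((∑ t ∈ Icc 1 N, ((t:ℝ) ^ (2 * p))) + ((N:ℝ)+1) ^ (2 * p)) := by ring
  -- D is nonnegative
  have hDnn : ∀ N, N ≤ T → 0 ≤ ⟪u N, z⟫ := by
    intro N hNT
    rcases Nat.eq_zero_or_pos N with h | h
    · simp [h, hu0]
    · have hmem : N ∈ Icc 1 T := mem_Icc.mpr ⟨h, hNT⟩
      exact coneLift_inner_nonneg hXκ (hproj N hmem).1 (hXκ x' hx')
  -- per-step inequality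
  have hstep : ∀ N, N + 1 ≤ T →
      (((N:ℝ)+1) ^ p) * ⟪v (N+1), z⟫ ≤ ⟪u (N+1), z⟫ - ⟪u N, z⟫ := by
    intro N hNT
    have hmem : N + 1 ∈ Icc 1 T := mem_Icc.mpr ⟨Nat.succ_le_succ (Nat.zero_le N), hNT⟩
    have P := proj_cone_inner_le hXconv hXne (hproj (N+1) hmem) z hzK
    rw [inner_sub_left, inner_add_left, real_inner_smul_left] at P
    have : ((N+1 : ℕ) : ℝ) = (N:ℝ) + 1 := by push_cast; ring
    rw [this] at P
    have hN1 : u (N + 1 - 1) = u N := by rw [Nat.add_sub_cancel]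
    rw [hN1] at P
    linarith
  -- weighted sum bound by induction
  have hmain : ∀ N, N ≤ T →
      ∑ t ∈ Icc 1 N, ((t:ℝ) ^ q) * ⟪v t, z⟫ ≤ (N:ℝ) ^ (q - p) * ⟪u N, z⟫ := by
    intro N
    induction N with
    | zero => intro _; simp [hu0]
    | succ N ih =>
      intro hNT
      have ihN := ih (Nat.le_of_succ_le hNT)
      have hstepN := hstep N hNT
      have hDN := hDnn N (Nat.le_of_succ_le hNT)
      have hsum : ∑ t ∈ Icc 1 (N+1), ((t:ℝ) ^ q) * ⟪v t, z⟫
          = (∑ t ∈ Icc 1 N, ((t:ℝ) ^ q) * ⟪v t, z⟫) + (((N:ℝ)+1) ^ q) * ⟪v (N+1), z⟫ := by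
        rw [Finset.sum_Icc_succ_top (Nat.one_le_iff_ne_zero.mpr (Nat.succ_ne_zero N))]
        push_cast; ring_nf
      have hqsplit : ((N:ℝ)+1) ^ q = ((N:ℝ)+1) ^ (q - p) * ((N:ℝ)+1) ^ p := by
        rw [← pow_add, Nat.sub_add_cancel hpq]
      have hmono : (N:ℝ) ^ (q - p) ≤ ((N:ℝ)+1) ^ (q - p) :=
        pow_le_pow_left₀ (Nat.cast_nonneg N) (by linarith) _
      have hgmul : (N:ℝ) ^ (q - p) * ⟪u N, z⟫ ≤ ((N:ℝ)+1) ^ (q - p) * ⟪u N, z⟫ :=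
        mul_le_mul_of_nonneg_right hmono hDN
      have hsm : (((N:ℝ)+1) ^ q) * ⟪v (N+1), z⟫
          ≤ ((N:ℝ)+1) ^ (q - p) * (⟪u (N+1), z⟫ - ⟪u N, z⟫) := by
        rw [hqsplit, mul_assoc]
        exact mul_le_mul_of_nonneg_left hstepN (pow_nonneg (by linarith [Nat.cast_nonneg (α := ℝ) N]) _)
      rw [hsum]
      push_cast
      nlinarith [hgmul, hsm, ihN]
  -- conclude
  have hST := hmain T le_rfl
  have hzn : ‖z‖ ≤ Real.sqrt 2 * κ := by
    have h2 : ‖z‖ ^ 2 ≤ 2 * κ ^ 2 := by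
      rw [hz, norm_pr_sq]
      have := hXκ x' hx'
      nlinarith [norm_nonneg x']
    calc ‖z‖ = Real.sqrt (‖z‖ ^ 2) := (Real.sqrt_sq (norm_nonneg z)).symm
      _ ≤ Real.sqrt (2 * κ ^ 2) := Real.sqrt_le_sqrt h2
      _ = Real.sqrt 2 * κ := by
          rw [Real.sqrt_mul (by norm_num), Real.sqrt_sq hκ.le]
  have hun : ‖u T‖ ≤ Real.sqrt 2 * (L * Real.sqrt (∑ t ∈ Icc 1 T, ((t:ℝ) ^ (2 * p)))) := by
    have h2 := hnorm T le_rfl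
    calc ‖u T‖ = Real.sqrt (‖u T‖ ^ 2) := (Real.sqrt_sq (norm_nonneg _)).symm
      _ ≤ Real.sqrt (2 * L ^ 2 * ∑ t ∈ Icc 1 T, ((t:ℝ) ^ (2 * p))) := Real.sqrt_le_sqrt h2
      _ = Real.sqrt 2 * (L * Real.sqrt (∑ t ∈ Icc 1 T, ((t:ℝ) ^ (2 * p)))) := by
          rw [show 2 * L ^ 2 * ∑ t ∈ Icc 1 T, ((t:ℝ) ^ (2 * p))
              = 2 * (L ^ 2 * ∑ t ∈ Icc 1 T, ((t:ℝ) ^ (2 * p))) by ring,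
            Real.sqrt_mul (by norm_num), Real.sqrt_mul (sq_nonneg L), Real.sqrt_sq hL]
  have hDT : ⟪u T, z⟫ ≤ ‖u T‖ * ‖z‖ := real_inner_le_norm _ _
  have hs2 : Real.sqrt 2 * Real.sqrt 2 = 2 := Real.mul_self_sqrt (by norm_num)
  have hsq0 : (0:ℝ) ≤ Real.sqrt (∑ t ∈ Icc 1 T, ((t:ℝ) ^ (2 * p))) := Real.sqrt_nonneg _
  have hTp : (0:ℝ) ≤ (T:ℝ) ^ (q - p) := pow_nonneg (Nat.cast_nonneg T) _
  have huz : ⟪u T, z⟫ ≤ 2 * κ * L * Real.sqrt (∑ t ∈ Icc 1 T, ((t:ℝ) ^ (2 * p))) := by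
    have hz0' : (0:ℝ) ≤ ‖z‖ := norm_nonneg _
    have h1 : ‖u T‖ * ‖z‖ ≤ (Real.sqrt 2 * (L * Real.sqrt (∑ t ∈ Icc 1 T, ((t:ℝ) ^ (2 * p))))) * (Real.sqrt 2 * κ) :=
      mul_le_mul hun hzn hz0' (by positivity)
    have h2 : (Real.sqrt 2 * (L * Real.sqrt (∑ t ∈ Icc 1 T, ((t:ℝ) ^ (2 * p))))) * (Real.sqrt 2 * κ)
        = 2 * κ * L * Real.sqrt (∑ t ∈ Icc 1 T, ((t:ℝ) ^ (2 * p))) := by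
      calc (Real.sqrt 2 * (L * Real.sqrt (∑ t ∈ Icc 1 T, ((t:ℝ) ^ (2 * p))))) * (Real.sqrt 2 * κ)
          = (Real.sqrt 2 * Real.sqrt 2) * (κ * L * Real.sqrt (∑ t ∈ Icc 1 T, ((t:ℝ) ^ (2 * p)))) := by ring
        _ = 2 * κ * L * Real.sqrt (∑ t ∈ Icc 1 T, ((t:ℝ) ^ (2 * p))) := by rw [hs2]; ring
    linarith [hDT]
  calc ∑ t ∈ Icc 1 T, ((t:ℝ) ^ q) * ⟪v t, z⟫ ≤ (T:ℝ) ^ (q - p) * ⟪u T, z⟫ := hST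
    _ ≤ (T:ℝ) ^ (q - p) * (2 * κ * L * Real.sqrt (∑ t ∈ Icc 1 T, ((t:ℝ) ^ (2 * p)))) :=
        mul_le_mul_of_nonneg_left huz hTp
    _ = 2 * κ * L * (T:ℝ) ^ (q - p) * Real.sqrt (∑ t ∈ Icc 1 T, ((t:ℝ) ^ (2 * p))) := by ring

lemma stepBound (a : ℝ) (ha : 0 ≤ a) (r : ℕ) :
    ((r:ℝ) + 1) * a ^ r ≤ (a + 1) ^ (r + 1) - a ^ (r + 1) ∧
    (a + 1) ^ (r + 1) - a ^ (r + 1) ≤ ((r:ℝ) + 1) * (a + 1) ^ r := by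
  have key := geom_sum₂_mul (a + 1) a (r + 1)
  rw [add_sub_cancel_left, mul_one] at key
  have hterm : ∀ i ∈ Finset.range (r + 1),
      a ^ r ≤ (a + 1) ^ i * a ^ (r + 1 - 1 - i) ∧
      (a + 1) ^ i * a ^ (r + 1 - 1 - i) ≤ (a + 1) ^ r := by
    intro i hi
    have hir : i ≤ r := Nat.lt_succ_iff.mp (Finset.mem_range.mp hi)
    have h1 : r + 1 - 1 - i = r - i := by omega
    rw [h1]
    constructor
    · calc a ^ r = a ^ i * a ^ (r - i) := by
            rw [← pow_add, Nat.add_sub_cancel' hir]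
        _ ≤ (a + 1) ^ i * a ^ (r - i) :=
            mul_le_mul_of_nonneg_right (pow_le_pow_left₀ ha (by linarith) i) (pow_nonneg ha _)
    · calc (a + 1) ^ i * a ^ (r - i) ≤ (a + 1) ^ i * (a + 1) ^ (r - i) :=
            mul_le_mul_of_nonneg_left (pow_le_pow_left₀ ha (by linarith) _)
              (pow_nonneg (by linarith) i)
        _ = (a + 1) ^ r := by rw [← pow_add, Nat.add_sub_cancel' hir]
  constructor
  · rw [← key]
    calc ((r:ℝ) + 1) * a ^ r = ∑ _i ∈ Finset.range (r + 1), a ^ r := by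
          rw [Finset.sum_const, Finset.card_range, nsmul_eq_mul]; push_cast; ring
      _ ≤ ∑ i ∈ Finset.range (r + 1), (a + 1) ^ i * a ^ (r + 1 - 1 - i) :=
          Finset.sum_le_sum fun i hi => (hterm i hi).1
  · rw [← key]
    calc ∑ i ∈ Finset.range (r + 1), (a + 1) ^ i * a ^ (r + 1 - 1 - i)
        ≤ ∑ _i ∈ Finset.range (r + 1), (a + 1) ^ r :=
          Finset.sum_le_sum fun i hi => (hterm i hi).2
      _ = ((r:ℝ) + 1) * (a + 1) ^ r := by
          rw [Finset.sum_const, Finset.card_range, nsmul_eq_mul]; push_cast; ring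

lemma sum_pow_ge (r T : ℕ) :
    (T:ℝ) ^ (r + 1) ≤ ((r:ℝ) + 1) * ∑ t ∈ Icc 1 T, (t:ℝ) ^ r := by
  induction T with
  | zero => simp
  | succ T ih =>
    rw [Finset.sum_Icc_succ_top (Nat.le_add_left 1 T)]
    have hb := (stepBound (T:ℝ) (Nat.cast_nonneg T) r).2
    push_cast
    push_cast at ih
    nlinarith [ih, hb]

lemma sum_pow_le (r T : ℕ) :
    ((r:ℝ) + 1) * ∑ t ∈ Icc 1 T, (t:ℝ) ^ r ≤ ((r:ℝ) + 1) * (T:ℝ) ^ r + (T:ℝ) ^ (r + 1) := by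
  induction T with
  | zero => simp; positivity
  | succ T ih =>
    rw [Finset.sum_Icc_succ_top (Nat.le_add_left 1 T)]
    have hb := (stepBound (T:ℝ) (Nat.cast_nonneg T) r).1
    have hmono : ((T:ℝ)) ^ r ≤ ((T:ℝ) + 1) ^ r :=
      pow_le_pow_left₀ (Nat.cast_nonneg T) (by linarith) r
    push_cast
    push_cast at ih
    nlinarith [ih, hb, hmono]


set_option maxHeartbeats 2000000 in
/-- Theorem 4, part 2: in the repeated game framework where both
players use CBA⁺ with payoff weights `ω_t = t^p` and decision weights `θ_t = t^q`
(`q ≥ p`), the `θ`-weighted average iterates have duality gap at most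
`c · κ L (q+1) / (√(p+1) √T)` for a universal `c`. -/
theorem stmt10 :
    ∃ c : ℝ, 0 < c ∧
      ∀ (n m : ℕ)
        (X : Set (EuclideanSpace ℝ (Fin n))) (Y : Set (EuclideanSpace ℝ (Fin m))),
        X.Nonempty → Convex ℝ X → IsCompact X →
        Y.Nonempty → Convex ℝ Y → IsCompact Y →
        ∀ κ : ℝ, IsGreatest (((fun x => ‖x‖) '' X) ∪ ((fun y => ‖y‖) '' Y)) κ → 0 < κ →
        ∀ F : EuclideanSpace ℝ (Fin n) → EuclideanSpace ℝ (Fin m) → ℝ,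
        (∀ y ∈ Y, ConvexOn ℝ X (fun x => F x y)) →
        (∀ x ∈ X, ConcaveOn ℝ Y (fun y => F x y)) →
        ∀ (p q : ℕ), p ≤ q → ∀ T : ℕ, 1 ≤ T →
        ∀ L : ℝ,
        ∀ (x : ℕ → EuclideanSpace ℝ (Fin n)) (y : ℕ → EuclideanSpace ℝ (Fin m))
          (f : ℕ → EuclideanSpace ℝ (Fin n)) (g : ℕ → EuclideanSpace ℝ (Fin m)),
        (∀ t ∈ Icc 1 T, x t ∈ X) → (∀ t ∈ Icc 1 T, y t ∈ Y) →
        -- `f t` is a subgradient of `F(·, y t)` at `x t`, with `‖f t‖₂ ≤ L`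
        (∀ t ∈ Icc 1 T,
          (∀ x' ∈ X, F (x t) (y t) + ⟪f t, x' - x t⟫ ≤ F x' (y t)) ∧ ‖f t‖ ≤ L) →
        -- `g t` is a supergradient of `F(x t, ·)` at `y t`, with `‖g t‖₂ ≤ L`
        (∀ t ∈ Icc 1 T,
          (∀ y' ∈ Y, F (x t) y' ≤ F (x t) (y t) + ⟪g t, y' - y t⟫) ∧ ‖g t‖ ≤ L) →
        -- CBA⁺ recursion and choice rule for the first player:
        -- `u_t^x = π_{C_X}(u_{t-1}^x + t^p • (⟨f_t, x_t⟩/κ, −f_t))`, `u_{t-1}^x = β_t • (κ, x_t)`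
        ∀ ux : ℕ → EuclideanSpace ℝ (Fin (n + 1)), ux 0 = 0 →
        (∀ t ∈ Icc 1 T,
          IsProjOn (ux (t - 1) + ((t : ℝ) ^ p) • pr (⟪f t, x t⟫ / κ) (-(f t)))
            (coneLift κ X) (ux t)) →
        (∀ t ∈ Icc 1 T, ∃ β : ℝ, 0 ≤ β ∧ ux (t - 1) = β • pr κ (x t)) →
        -- CBA⁺ recursion and choice rule for the second player:
        -- `u_t^y = π_{C_Y}(u_{t-1}^y + t^p • (−⟨g_t, y_t⟩/κ, g_t))`, `u_{t-1}^y = β'_t • (κ, y_t)`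
        ∀ uy : ℕ → EuclideanSpace ℝ (Fin (m + 1)), uy 0 = 0 →
        (∀ t ∈ Icc 1 T,
          IsProjOn (uy (t - 1) + ((t : ℝ) ^ p) • pr (-⟪g t, y t⟫ / κ) (g t))
            (coneLift κ Y) (uy t)) →
        (∀ t ∈ Icc 1 T, ∃ β : ℝ, 0 ≤ β ∧ uy (t - 1) = β • pr κ (y t)) →
        (⨆ yy : Y,
            F ((∑ t ∈ Icc 1 T, ((t : ℝ) ^ q))⁻¹ • ∑ t ∈ Icc 1 T, ((t : ℝ) ^ q) • x t) yy)
          - (⨅ xx : X,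
              F xx ((∑ t ∈ Icc 1 T, ((t : ℝ) ^ q))⁻¹ • ∑ t ∈ Icc 1 T, ((t : ℝ) ^ q) • y t))
        ≤ c * κ * L * ((q : ℝ) + 1) / (Real.sqrt ((p : ℝ) + 1) * Real.sqrt (T : ℝ)) := by
  refine ⟨8, by norm_num, ?_⟩
  intro n m X Y hXne hXconv _hXcomp hYne hYconv _hYcomp κ hκgr hκpos F hFcx hFcv
    p q hpq T hT L x y f g hxX hyY hf hg ux hux0 huxproj huxprop uy huy0 huyproj huyprop
  have hXκ : ∀ a ∈ X, ‖a‖ ≤ κ := fun a ha => hκgr.2 (Or.inl ⟨a, ha, rfl⟩)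
  have hYκ : ∀ b ∈ Y, ‖b‖ ≤ κ := fun b hb => hκgr.2 (Or.inr ⟨b, hb, rfl⟩)
  have h1T : (1:ℕ) ∈ Icc 1 T := mem_Icc.mpr ⟨le_rfl, hT⟩
  have hL0 : 0 ≤ L := le_trans (norm_nonneg (f 1)) (hf 1 h1T).2
  have hκL : 0 ≤ κ * L := mul_nonneg hκpos.le hL0
  have hTpos : (0:ℝ) < (T:ℝ) := by exact_mod_cast hT
  have hΘpos : 0 < ∑ t ∈ Icc 1 T, ((t:ℝ) ^ q) := by
    refine Finset.sum_pos (fun t ht => ?_) ⟨1, h1T⟩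
    have h1 := (mem_Icc.mp ht).1
    have h2 : (0:ℝ) < (t:ℝ) := by exact_mod_cast h1
    positivity
  have hSnn : 0 ≤ ∑ t ∈ Icc 1 T, ((t:ℝ) ^ (2 * p)) :=
    Finset.sum_nonneg fun t _ => by positivity
  set s : ℝ := Real.sqrt (T:ℝ) with hs
  set sp : ℝ := Real.sqrt ((p:ℝ) + 1) with hsp
  have hss : s * s = (T:ℝ) := Real.mul_self_sqrt hTpos.le
  have hspsp : sp * sp = (p:ℝ) + 1 := Real.mul_self_sqrt (by positivity)
  have hspos : 0 < s := Real.sqrt_pos.mpr hTpos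
  have hsppos : 0 < sp := Real.sqrt_pos.mpr (by positivity)
  -- the key pointwise duality gap bound
  have key : ∀ yh ∈ Y, ∀ xh ∈ X,
      F ((∑ t ∈ Icc 1 T, ((t : ℝ) ^ q))⁻¹ • ∑ t ∈ Icc 1 T, ((t : ℝ) ^ q) • x t) yh
        - F xh ((∑ t ∈ Icc 1 T, ((t : ℝ) ^ q))⁻¹ • ∑ t ∈ Icc 1 T, ((t : ℝ) ^ q) • y t)
      ≤ 8 * κ * L * ((q : ℝ) + 1) / (sp * s) := by
    intro yh hyh xh hxh
    -- Jensen's inequality, convex side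
    have hJx : F ((∑ t ∈ Icc 1 T, ((t : ℝ) ^ q))⁻¹ • ∑ t ∈ Icc 1 T, ((t : ℝ) ^ q) • x t) yh
        ≤ (∑ t ∈ Icc 1 T, ((t:ℝ) ^ q))⁻¹ * ∑ t ∈ Icc 1 T, ((t:ℝ) ^ q) * F (x t) yh := by
      have h := ConvexOn.map_centerMass_le (hFcx yh hyh)
        (t := Icc 1 T) (w := fun t : ℕ => ((t:ℝ) ^ q)) (p := x)
        (fun t _ => by positivity) hΘpos (fun t ht => hxX t ht)
      simpa [Finset.centerMass, smul_eq_mul, Function.comp] using h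
    -- Jensen's inequality, concave side
    have hJy : (∑ t ∈ Icc 1 T, ((t:ℝ) ^ q))⁻¹ * ∑ t ∈ Icc 1 T, ((t:ℝ) ^ q) * F xh (y t)
        ≤ F xh ((∑ t ∈ Icc 1 T, ((t : ℝ) ^ q))⁻¹ • ∑ t ∈ Icc 1 T, ((t : ℝ) ^ q) • y t) := by
      have h := ConcaveOn.le_map_centerMass (hFcv xh hxh)
        (t := Icc 1 T) (w := fun t : ℕ => ((t:ℝ) ^ q)) (p := y)
        (fun t _ => by positivity) hΘpos (fun t ht => hyY t ht)
      simpa [Finset.centerMass, smul_eq_mul, Function.comp] using h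
    -- per-round linearization
    have hfg : ∀ t ∈ Icc 1 T,
        F (x t) yh ≤ F xh (y t) + (⟪g t, yh - y t⟫ + ⟪f t, x t - xh⟫) := by
      intro t ht
      have h1 := (hg t ht).1 yh hyh
      have h2 := (hf t ht).1 xh hxh
      have h3 : ⟪f t, xh - x t⟫ = ⟪f t, xh⟫ - ⟪f t, x t⟫ := inner_sub_right _ _ _
      have h4 : ⟪f t, x t - xh⟫ = ⟪f t, x t⟫ - ⟪f t, xh⟫ := inner_sub_right _ _ _
      linarith
    -- gap bound via A
    have hgap : F ((∑ t ∈ Icc 1 T, ((t : ℝ) ^ q))⁻¹ • ∑ t ∈ Icc 1 T, ((t : ℝ) ^ q) • x t) yh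
        - F xh ((∑ t ∈ Icc 1 T, ((t : ℝ) ^ q))⁻¹ • ∑ t ∈ Icc 1 T, ((t : ℝ) ^ q) • y t)
        ≤ (∑ t ∈ Icc 1 T, ((t:ℝ) ^ q))⁻¹ *
            ∑ t ∈ Icc 1 T, ((t:ℝ) ^ q) * (⟪g t, yh - y t⟫ + ⟪f t, x t - xh⟫) := by
      have hs1 : ∑ t ∈ Icc 1 T, ((t:ℝ) ^ q) * F (x t) yh
          ≤ ∑ t ∈ Icc 1 T, ((t:ℝ) ^ q) * (F xh (y t) + (⟪g t, yh - y t⟫ + ⟪f t, x t - xh⟫)) :=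
        Finset.sum_le_sum fun t ht => mul_le_mul_of_nonneg_left (hfg t ht) (by positivity)
      have hs2 : ∑ t ∈ Icc 1 T, ((t:ℝ) ^ q) * (F xh (y t) + (⟪g t, yh - y t⟫ + ⟪f t, x t - xh⟫))
          = (∑ t ∈ Icc 1 T, ((t:ℝ) ^ q) * F xh (y t))
            + ∑ t ∈ Icc 1 T, ((t:ℝ) ^ q) * (⟪g t, yh - y t⟫ + ⟪f t, x t - xh⟫) := by
        rw [← Finset.sum_add_distrib]
        exact Finset.sum_congr rfl fun t _ => by ring
      have hinv : (0:ℝ) ≤ (∑ t ∈ Icc 1 T, ((t:ℝ) ^ q))⁻¹ := inv_nonneg.mpr hΘpos.le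
      have h5 := mul_le_mul_of_nonneg_left (le_of_le_of_eq hs1 hs2) hinv
      rw [mul_add] at h5
      linarith [hJx, hJy]
    -- regret bound for the x-player
    have hv0x : ∀ t ∈ Icc 1 T, ⟪pr κ (x t), pr (⟪f t, x t⟫ / κ) (-(f t))⟫ = 0 := by
      intro t ht
      rw [inner_pr, inner_neg_right]
      have h6 : κ * (⟪f t, x t⟫ / κ) = ⟪f t, x t⟫ := by field_simp
      rw [h6, real_inner_comm]
      ring
    have hvnx : ∀ t ∈ Icc 1 T, ‖pr (⟪f t, x t⟫ / κ) (-(f t))‖ ^ 2 ≤ 2 * L ^ 2 := by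
      intro t ht
      rw [norm_pr_sq, norm_neg]
      have hft := (hf t ht).2
      have hxt := hXκ _ (hxX t ht)
      have h1 : |⟪f t, x t⟫| ≤ L * κ :=
        (abs_real_inner_le_norm (f t) (x t)).trans
          (mul_le_mul hft hxt (norm_nonneg _) hL0)
      have h2 : (⟪f t, x t⟫ / κ) ^ 2 ≤ L ^ 2 := by
        rw [div_pow, div_le_iff₀ (by positivity)]
        obtain ⟨ha, hb⟩ := abs_le.mp h1
        nlinarith
      have h3 : ‖f t‖ ^ 2 ≤ L ^ 2 := pow_le_pow_left₀ (norm_nonneg _) hft 2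
      linarith
    have hRx := regret_bound hXconv hXne hκpos hL0 hXκ p q T hpq x hxX
      (fun t => pr (⟪f t, x t⟫ / κ) (-(f t))) hv0x hvnx ux hux0 huxproj huxprop hxh
    have hRx' : ∑ t ∈ Icc 1 T, ((t:ℝ) ^ q) * ⟪f t, x t - xh⟫
        ≤ 2 * κ * L * (T:ℝ) ^ (q - p) * Real.sqrt (∑ t ∈ Icc 1 T, ((t:ℝ) ^ (2 * p))) := by
      refine le_of_eq_of_le (Finset.sum_congr rfl fun t ht => ?_) hRx
      rw [inner_pr, div_mul_cancel₀ _ hκpos.ne', inner_neg_left, inner_sub_right]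
      ring
    -- regret bound for the y-player
    have hv0y : ∀ t ∈ Icc 1 T, ⟪pr κ (y t), pr (-⟪g t, y t⟫ / κ) (g t)⟫ = 0 := by
      intro t ht
      rw [inner_pr]
      have h6 : κ * (-⟪g t, y t⟫ / κ) = -⟪g t, y t⟫ := by
        field_simp
      rw [h6, real_inner_comm]
      ring
    have hvny : ∀ t ∈ Icc 1 T, ‖pr (-⟪g t, y t⟫ / κ) (g t)‖ ^ 2 ≤ 2 * L ^ 2 := by
      intro t ht
      rw [norm_pr_sq]
      have hgt := (hg t ht).2
      have hyt := hYκ _ (hyY t ht)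
      have h1 : |⟪g t, y t⟫| ≤ L * κ :=
        (abs_real_inner_le_norm (g t) (y t)).trans
          (mul_le_mul hgt hyt (norm_nonneg _) hL0)
      have h2 : (⟪g t, y t⟫ / κ) ^ 2 ≤ L ^ 2 := by
        rw [div_pow, div_le_iff₀ (by positivity)]
        obtain ⟨ha, hb⟩ := abs_le.mp h1
        nlinarith
      have h3 : (-⟪g t, y t⟫ / κ) ^ 2 = (⟪g t, y t⟫ / κ) ^ 2 := by ring
      have h4 : ‖g t‖ ^ 2 ≤ L ^ 2 := pow_le_pow_left₀ (norm_nonneg _) hgt 2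
      linarith
    have hRy := regret_bound hYconv hYne hκpos hL0 hYκ p q T hpq y hyY
      (fun t => pr (-⟪g t, y t⟫ / κ) (g t)) hv0y hvny uy huy0 huyproj huyprop hyh
    have hRy' : ∑ t ∈ Icc 1 T, ((t:ℝ) ^ q) * ⟪g t, yh - y t⟫
        ≤ 2 * κ * L * (T:ℝ) ^ (q - p) * Real.sqrt (∑ t ∈ Icc 1 T, ((t:ℝ) ^ (2 * p))) := by
      refine le_of_eq_of_le (Finset.sum_congr rfl fun t ht => ?_) hRy
      rw [inner_pr, inner_sub_right]
      have h6 : -⟪g t, y t⟫ / κ * κ = -⟪g t, y t⟫ := by field_simp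
      rw [h6]
      ring
    -- the two bounds on A
    have hAsplit : ∑ t ∈ Icc 1 T, ((t:ℝ) ^ q) * (⟪g t, yh - y t⟫ + ⟪f t, x t - xh⟫)
        = (∑ t ∈ Icc 1 T, ((t:ℝ) ^ q) * ⟪g t, yh - y t⟫)
          + ∑ t ∈ Icc 1 T, ((t:ℝ) ^ q) * ⟪f t, x t - xh⟫ := by
      rw [← Finset.sum_add_distrib]
      exact Finset.sum_congr rfl fun t _ => by ring
    have hA2 : ∑ t ∈ Icc 1 T, ((t:ℝ) ^ q) * (⟪g t, yh - y t⟫ + ⟪f t, x t - xh⟫)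
        ≤ 4 * κ * L * (T:ℝ) ^ (q - p) * Real.sqrt (∑ t ∈ Icc 1 T, ((t:ℝ) ^ (2 * p))) := by
      rw [hAsplit]; linarith
    have hA1 : ∑ t ∈ Icc 1 T, ((t:ℝ) ^ q) * (⟪g t, yh - y t⟫ + ⟪f t, x t - xh⟫)
        ≤ (∑ t ∈ Icc 1 T, ((t:ℝ) ^ q)) * (4 * κ * L) := by
      rw [Finset.sum_mul]
      refine Finset.sum_le_sum fun t ht => mul_le_mul_of_nonneg_left ?_ (by positivity)
      have e1 : ⟪g t, yh - y t⟫ ≤ 2 * κ * L := by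
        have hi := real_inner_le_norm (g t) (yh - y t)
        have h2 : ‖yh - y t‖ ≤ 2 * κ := by
          have h3 := norm_sub_le yh (y t)
          have h4 := hYκ yh hyh
          have h5 := hYκ (y t) (hyY t ht)
          linarith
        have h6 : ‖g t‖ * ‖yh - y t‖ ≤ L * (2 * κ) :=
          mul_le_mul (hg t ht).2 h2 (norm_nonneg _) hL0
        linarith
      have e2 : ⟪f t, x t - xh⟫ ≤ 2 * κ * L := by
        have hi := real_inner_le_norm (f t) (x t - xh)
        have h2 : ‖x t - xh‖ ≤ 2 * κ := by
          have h3 := norm_sub_le (x t) xh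
          have h4 := hXκ xh hxh
          have h5 := hXκ (x t) (hxX t ht)
          linarith
        have h6 : ‖f t‖ * ‖x t - xh‖ ≤ L * (2 * κ) :=
          mul_le_mul (hf t ht).2 h2 (norm_nonneg _) hL0
        linarith
      linarith
    -- from A-bound to the final bound
    have hAB : ∑ t ∈ Icc 1 T, ((t:ℝ) ^ q) * (⟪g t, yh - y t⟫ + ⟪f t, x t - xh⟫)
        ≤ (∑ t ∈ Icc 1 T, ((t:ℝ) ^ q)) * (8 * κ * L * ((q : ℝ) + 1) / (sp * s)) := by
      by_cases hc : T ≤ q + 1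
      · -- small T: use the trivial bound
        have hsps : sp * s ≤ (q:ℝ) + 1 := by
          have h1 : sp * s = Real.sqrt (((p:ℝ) + 1) * (T:ℝ)) := by
            rw [hsp, hs, ← Real.sqrt_mul (by positivity)]
          have h2 : ((p:ℝ) + 1) * (T:ℝ) ≤ ((q:ℝ) + 1) ^ 2 := by
            have hp' : (p:ℝ) ≤ (q:ℝ) := by exact_mod_cast hpq
            have hT' : (T:ℝ) ≤ (q:ℝ) + 1 := by exact_mod_cast hc
            nlinarith [hTpos.le]
          rw [h1]
          calc Real.sqrt (((p:ℝ) + 1) * (T:ℝ)) ≤ Real.sqrt (((q:ℝ) + 1) ^ 2) :=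
                Real.sqrt_le_sqrt h2
            _ = (q:ℝ) + 1 := Real.sqrt_sq (by positivity)
        refine le_trans hA1 ?_
        rw [show (∑ t ∈ Icc 1 T, ((t:ℝ) ^ q)) * (8 * κ * L * ((q : ℝ) + 1) / (sp * s))
            = (∑ t ∈ Icc 1 T, ((t:ℝ) ^ q)) * (8 * κ * L * ((q : ℝ) + 1)) / (sp * s) by ring,
          le_div_iff₀ (mul_pos hsppos hspos)]
        have h3 : (∑ t ∈ Icc 1 T, ((t:ℝ) ^ q)) * (4 * κ * L) * (sp * s)
            ≤ (∑ t ∈ Icc 1 T, ((t:ℝ) ^ q)) * (4 * κ * L) * ((q:ℝ) + 1) := by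
          refine mul_le_mul_of_nonneg_left hsps ?_
          have := mul_nonneg hΘpos.le hκL
          nlinarith
        have h4 : 0 ≤ (∑ t ∈ Icc 1 T, ((t:ℝ) ^ q)) * (κ * L) * ((q:ℝ) + 1) :=
          mul_nonneg (mul_nonneg hΘpos.le hκL) (by positivity)
        nlinarith [h3, h4]
      · -- large T: use the regret bound
        have hTq : (q:ℝ) + 1 < (T:ℝ) := by exact_mod_cast Nat.lt_of_not_le hc
        have hp' : (p:ℝ) ≤ (q:ℝ) := by exact_mod_cast hpq
        have hTp1 : (p:ℝ) + 1 ≤ (T:ℝ) := by linarith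
        have hP : (0:ℝ) ≤ (p:ℝ) := Nat.cast_nonneg p
        have hsum' := sum_pow_le (2 * p) T
        push_cast at hsum'
        have hTT : (T:ℝ) ^ (2 * p + 1) = (T:ℝ) ^ (2 * p) * (T:ℝ) := pow_succ _ _
        rw [hTT] at hsum'
        have hSS : ((p:ℝ) + 1) * (∑ t ∈ Icc 1 T, ((t:ℝ) ^ (2 * p)))
            ≤ 2 * ((T:ℝ) ^ (2 * p) * (T:ℝ)) := by
          have h6 := mul_le_mul_of_nonneg_left hsum' (by linarith : (0:ℝ) ≤ (p:ℝ) + 1)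
          have h7 : ((p:ℝ)+1) * ((2*(p:ℝ)+1) * (T:ℝ) ^ (2*p))
              ≤ (T:ℝ) * ((2*(p:ℝ)+1) * (T:ℝ) ^ (2*p)) :=
            mul_le_mul_of_nonneg_right hTp1 (by positivity)
          have h8 : ((p:ℝ)+1) * ((T:ℝ) ^ (2*p) * (T:ℝ))
              ≤ (2*(p:ℝ)+1) * ((T:ℝ) ^ (2*p) * (T:ℝ)) :=
            mul_le_mul_of_nonneg_right (by linarith) (by positivity)
          have h9 : (2*(p:ℝ)+1) * (((p:ℝ)+1) * (∑ t ∈ Icc 1 T, ((t:ℝ) ^ (2 * p))))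
              ≤ (2*(p:ℝ)+1) * (2 * ((T:ℝ) ^ (2*p) * (T:ℝ))) := by nlinarith [h6, h7, h8]
          exact le_of_mul_le_mul_left h9 (by linarith)
        have hsqS : Real.sqrt (∑ t ∈ Icc 1 T, ((t:ℝ) ^ (2 * p))) * sp
            ≤ Real.sqrt 2 * ((T:ℝ) ^ p * s) := by
          rw [hsp, ← Real.sqrt_mul hSnn]
          have h11 : (∑ t ∈ Icc 1 T, ((t:ℝ) ^ (2 * p))) * ((p:ℝ) + 1)
              ≤ 2 * ((T:ℝ) ^ (2*p) * (T:ℝ)) := by rw [mul_comm]; exact hSS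
          calc Real.sqrt ((∑ t ∈ Icc 1 T, ((t:ℝ) ^ (2 * p))) * ((p:ℝ) + 1))
              ≤ Real.sqrt (2 * ((T:ℝ) ^ (2*p) * (T:ℝ))) := Real.sqrt_le_sqrt h11
            _ = Real.sqrt 2 * ((T:ℝ) ^ p * s) := by
                rw [Real.sqrt_mul (by norm_num), Real.sqrt_mul (by positivity), hs]
                congr 2
                rw [show (T:ℝ) ^ (2*p) = ((T:ℝ) ^ p) ^ 2 by rw [← pow_mul, Nat.mul_comm],
                  Real.sqrt_sq (by positivity)]
        refine le_trans hA2 ?_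
        rw [show (∑ t ∈ Icc 1 T, ((t:ℝ) ^ q)) * (8 * κ * L * ((q : ℝ) + 1) / (sp * s))
            = 8 * κ * L * ((q:ℝ) + 1) * (∑ t ∈ Icc 1 T, ((t:ℝ) ^ q)) / (sp * s) by ring,
          le_div_iff₀ (mul_pos hsppos hspos)]
        -- goal: 4κL T^{q-p} √Σ * (sp * s) ≤ 8κL(q+1)Θ
        have hTqp : (T:ℝ) ^ (q - p) * (T:ℝ) ^ p = (T:ℝ) ^ q := by
          rw [← pow_add, Nat.sub_add_cancel hpq]
        have hs2' : Real.sqrt 2 ≤ 2 := by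
          have h12 := Real.sqrt_le_sqrt (by norm_num : (2:ℝ) ≤ 4)
          rwa [show Real.sqrt 4 = 2 by
            rw [show (4:ℝ) = 2 ^ 2 by norm_num, Real.sqrt_sq (by norm_num)]] at h12
        have hmon0 : (0:ℝ) ≤ κ * L * (T:ℝ) ^ (q - p) * s :=
          mul_nonneg (mul_nonneg hκL (pow_nonneg hTpos.le _)) hspos.le
        have c2 : (4 * (κ * L * (T:ℝ) ^ (q - p) * s)) *
              (Real.sqrt (∑ t ∈ Icc 1 T, ((t:ℝ) ^ (2 * p))) * sp)
            ≤ (4 * (κ * L * (T:ℝ) ^ (q - p) * s)) * (Real.sqrt 2 * ((T:ℝ) ^ p * s)) :=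
          mul_le_mul_of_nonneg_left hsqS (by linarith)
        have c3 : (4 * (κ * L * (T:ℝ) ^ (q - p) * s)) * (Real.sqrt 2 * ((T:ℝ) ^ p * s))
            = 4 * Real.sqrt 2 * (κ * L) * ((T:ℝ) ^ (q - p) * (T:ℝ) ^ p) * (s * s) := by ring
        rw [hTqp, hss] at c3
        have hmon1 : (0:ℝ) ≤ κ * L * ((T:ℝ) ^ q * (T:ℝ)) :=
          mul_nonneg hκL (by positivity)
        have c4 : 4 * Real.sqrt 2 * (κ * L) * ((T:ℝ) ^ q) * (T:ℝ)
            ≤ 8 * (κ * L) * ((T:ℝ) ^ q) * (T:ℝ) := by nlinarith [hs2', hmon1]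
        have hΘge := sum_pow_ge q T
        have c5 : 8 * (κ * L) * ((T:ℝ) ^ (q+1))
            ≤ 8 * (κ * L) * (((q:ℝ) + 1) * ∑ t ∈ Icc 1 T, ((t:ℝ) ^ q)) :=
          mul_le_mul_of_nonneg_left hΘge (by linarith)
        have hpow : (T:ℝ) ^ (q + 1) = (T:ℝ) ^ q * (T:ℝ) := pow_succ _ _
        rw [hpow] at c5
        calc 4 * κ * L * (T:ℝ) ^ (q - p) * Real.sqrt (∑ t ∈ Icc 1 T, ((t:ℝ) ^ (2 * p)))
              * (sp * s)
            = (4 * (κ * L * (T:ℝ) ^ (q - p) * s)) *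
                (Real.sqrt (∑ t ∈ Icc 1 T, ((t:ℝ) ^ (2 * p))) * sp) := by ring
          _ ≤ (4 * (κ * L * (T:ℝ) ^ (q - p) * s)) * (Real.sqrt 2 * ((T:ℝ) ^ p * s)) := c2
          _ = 4 * Real.sqrt 2 * (κ * L) * ((T:ℝ) ^ q) * (T:ℝ) := c3
          _ ≤ 8 * (κ * L) * ((T:ℝ) ^ q) * (T:ℝ) := c4
          _ ≤ 8 * (κ * L) * (((q:ℝ) + 1) * ∑ t ∈ Icc 1 T, ((t:ℝ) ^ q)) := by linarith
          _ = 8 * κ * L * ((q:ℝ) + 1) * (∑ t ∈ Icc 1 T, ((t:ℝ) ^ q)) := by ring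
    -- finish
    have hfinal : (∑ t ∈ Icc 1 T, ((t:ℝ) ^ q))⁻¹ *
        (∑ t ∈ Icc 1 T, ((t:ℝ) ^ q) * (⟪g t, yh - y t⟫ + ⟪f t, x t - xh⟫))
        ≤ 8 * κ * L * ((q : ℝ) + 1) / (sp * s) := by
      rw [inv_mul_le_iff₀ hΘpos]
      exact hAB
    linarith [hgap, hfinal]
  -- assemble the sup/inf statement
  have hnY : Nonempty ↥Y := hYne.to_subtype
  have hnX : Nonempty ↥X := hXne.to_subtype
  rw [sub_le_iff_le_add]
  refine ciSup_le fun yy => ?_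
  have h2 : F ((∑ t ∈ Icc 1 T, ((t : ℝ) ^ q))⁻¹ • ∑ t ∈ Icc 1 T, ((t : ℝ) ^ q) • x t) yy
        - 8 * κ * L * ((q : ℝ) + 1) / (sp * s)
      ≤ ⨅ xx : X, F xx ((∑ t ∈ Icc 1 T, ((t : ℝ) ^ q))⁻¹ • ∑ t ∈ Icc 1 T, ((t : ℝ) ^ q) • y t) :=
    le_ciInf fun xx => by linarith [key yy yy.2 xx xx.2]
  linarith

end
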